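/- Let φ be a flow on a metric space X all of whose singularities are isolated points of X. Then there exists a continuous function r : X → (0,∞) such that for every x ∈ X, the set ⋂_{t∈ℝ} φ_t(B(x, r(x))) is contained in {x}. -/

import Mathlib

open Set Metric

def IsFlow {X : Type*} [TopologicalSpace X] (φ : ℝ → X → X) : Prop :=
  (∀ x, φ 0 x = x) ∧ (∀ s t x, φ (s + t) x = φ s (φ t x)) ∧
    Continuous (fun p : ℝ × X => φ p.1 p.2)

def TopExpansive {X : Type*} [MetricSpace X] (φ : ℝ → X → X) : Prop :=
  ∀ ε : ℝ, 0 < ε → ∃ δ : X → ℝ, Continuous δ ∧ (∀ x, 0 < δ x) ∧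
    ∀ x y : X, ∀ α : ℝ → ℝ, Continuous α → α 0 = 0 →
      (∀ t : ℝ, dist (φ t x) (φ (α t) y) < δ (φ t x)) →
      ∃ s ∈ Set.Icc (-ε) ε, φ s x = y

def ExpansiveFlow {X : Type*} [MetricSpace X] (φ : ℝ → X → X) : Prop :=
  ∀ ε : ℝ, 0 < ε → ∃ δ : ℝ, 0 < δ ∧
    ∀ x y : X, ∀ α : ℝ → ℝ, Continuous α → α 0 = 0 →
      (∀ t : ℝ, dist (φ t x) (φ (α t) y) < δ) →
      ∃ s ∈ Set.Icc (-ε) ε, φ s x = y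

theorem stmt13 {X : Type*} [MetricSpace X] (φ : ℝ → X → X)
    (hflow : IsFlow φ)
    (hiso : ∀ x : X, (∀ t : ℝ, φ t x = x) → ∃ ρ : ℝ, 0 < ρ ∧ Metric.ball x ρ = {x}) :
    ∃ r : X → ℝ, Continuous r ∧ (∀ x, 0 < r x) ∧
      ∀ x : X, (⋂ t : ℝ, φ t '' Metric.ball x (r x)) ⊆ {x} := by
  obtain ⟨h0, hadd, hcont⟩ := hflow
  -- The "good radius" predicate
  set P : X → ℝ → Prop := fun x s => (⋂ t : ℝ, φ t '' Metric.ball x s) ⊆ {x} with hP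
  have hmono : ∀ x : X, ∀ u s : ℝ, u ≤ s → P x s → P x u := by
    intro x u s hus hs
    refine Set.Subset.trans ?_ hs
    exact Set.iInter_mono fun t => Set.image_mono (Metric.ball_subset_ball hus)
  -- membership of the intersection at time t
  have hmem : ∀ (x y : X) (s : ℝ), y ∈ (⋂ t : ℝ, φ t '' Metric.ball x s) →
      ∀ t : ℝ, ∃ w, dist w x < s ∧ φ t w = y := by
    intro x y s hy t
    have := Set.mem_iInter.1 hy t
    obtain ⟨w, hw, hwy⟩ := this
    exact ⟨w, Metric.mem_ball.1 hw, hwy⟩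
  -- local constant radius
  have hloc : ∀ x₀ : X, ∃ c : ℝ, ∀ᶠ y in nhds x₀, c ∈ {s : ℝ | 0 < s ∧ P y s} := by
    intro x₀
    by_cases hsing : ∀ t : ℝ, φ t x₀ = x₀
    · obtain ⟨ρ, hρ, hball⟩ := hiso x₀ hsing
      refine ⟨ρ / 2, ?_⟩
      have hU : Metric.ball x₀ ρ ∈ nhds x₀ := Metric.ball_mem_nhds _ hρ
      filter_upwards [hU] with y hy
      have hyx : y = x₀ := by
        have := hball ▸ hy; exact this
      subst hyx
      refine ⟨by linarith, ?_⟩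
      intro z hz
      obtain ⟨w, hw, hwz⟩ := hmem _ _ _ hz 0
      rw [h0] at hwz
      subst hwz
      have : w ∈ Metric.ball y ρ := Metric.mem_ball.2 (by linarith)
      rw [hball] at this
      exact this
    · push_neg at hsing
      obtain ⟨T, hT⟩ := hsing
      set d : ℝ := dist (φ T x₀) x₀ with hd
      have hdpos : 0 < d := dist_pos.2 hT
      -- continuity of z ↦ φ T z at x₀
      have hcT : Continuous fun z : X => φ T z := by
        have := hcont.comp (Continuous.prodMk (continuous_const : Continuous fun _ : X => T)
          continuous_id)
        exact this
      have : ∀ᶠ z in nhds x₀, dist (φ T z) (φ T x₀) < d / 4 := by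
        have := (hcT.tendsto x₀) (Metric.ball_mem_nhds (φ T x₀) (by linarith : (0:ℝ) < d / 4))
        filter_upwards [this] with z hz
        exact Metric.mem_ball.1 hz
      obtain ⟨r₁, hr₁pos, hr₁⟩ := Metric.eventually_nhds_iff_ball.1 this
      set s : ℝ := min (r₁ / 2) (d / 8) with hs
      have hspos : 0 < s := lt_min (by linarith) (by linarith)
      refine ⟨s, ?_⟩
      filter_upwards [Metric.ball_mem_nhds x₀ hspos] with y hy
      refine ⟨hspos, ?_⟩
      intro z hz
      exfalso
      obtain ⟨w0, hw0, hw0z⟩ := hmem _ _ _ hz 0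
      rw [h0] at hw0z; subst hw0z
      obtain ⟨w, hw, hwz⟩ := hmem _ _ _ hz T
      have hyx₀ : dist y x₀ < s := Metric.mem_ball.1 hy
      have hwx₀ : dist w x₀ < r₁ := by
        have h1 : dist w x₀ ≤ dist w y + dist y x₀ := dist_triangle _ _ _
        have h2 : s ≤ r₁ / 2 := min_le_left _ _
        linarith
      have hTw : dist (φ T w) (φ T x₀) < d / 4 := hr₁ w (Metric.mem_ball.2 hwx₀)
      have hsd : s ≤ d / 8 := min_le_right _ _
      -- dist z y ≥ d - d/4 - s > s, but dist z y < s
      have h3 : d ≤ dist (φ T x₀) (φ T w) + dist (φ T w) y + dist y x₀ := by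
        have a1 := dist_triangle (φ T x₀) (φ T w) x₀
        have a2 := dist_triangle (φ T w) y x₀
        linarith [hd.ge]
      rw [hwz] at h3 hTw
      linarith [dist_comm (φ T x₀) w0]
  -- apply the partition-of-unity selection theorem
  have hconv : ∀ x : X, Convex ℝ {s : ℝ | 0 < s ∧ P x s} := by
    intro x
    have : OrdConnected {s : ℝ | 0 < s ∧ P x s} := by
      constructor
      rintro a ⟨ha, hPa⟩ b ⟨hb, hPb⟩ c hc
      exact ⟨lt_of_lt_of_le ha hc.1, hmono x c b hc.2 hPb⟩
    exact this.convex
  obtain ⟨g, hg⟩ := exists_continuous_forall_mem_convex_of_local_const hconv hloc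
  exact ⟨g, g.continuous, fun x => (hg x).1, fun x => (hg x).2⟩
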